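/- Let I ≥ 2 be an integer and S > 0 a real number, and define ψ : [0,1) → ℝ by ψ(ρ) = −(1/2)·log((1+(I−1)ρ)(1−ρ)^{I−1}) − I·S·ρ/(2(1−ρ)). For ρ ∈ [0,1), the derivative ψ'(ρ) is nonnegative if and only if both S ≤ (√I−1)/(√I+1) holds and ρ lies in the closed interval [ρ̂₋, ρ̂₊], where ρ̂₋ = (1/2)(1−S)(1 − √(1 − 4S/((I−1)(1−S)²))) and ρ̂₊ = (1/2)(1−S)(1 + √(1 − 4S/((I−1)(1−S)²))). -/

import Mathlib

open Real Set

/-- `ψ(ρ) = log χ(ρ)`, the log of the likelihood ratio factor in an ANOVA study with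
`I` cells and normalized within-group sum of squares `S`. -/
noncomputable def psiFun (I : ℕ) (S ρ : ℝ) : ℝ :=
  -(1 / 2) * Real.log ((1 + ((I : ℝ) - 1) * ρ) * (1 - ρ) ^ (I - 1)) -
    (I : ℝ) * S * ρ / (2 * (1 - ρ))

/-- The lower root `ρ̂₋`. -/
noncomputable def rhoHatMinus (I : ℕ) (S : ℝ) : ℝ :=
  (1 / 2) * (1 - S) * (1 - Real.sqrt (1 - 4 * S / (((I : ℝ) - 1) * (1 - S) ^ 2)))

/-- The upper root `ρ̂₊`. -/
noncomputable def rhoHatPlus (I : ℕ) (S : ℝ) : ℝ :=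
  (1 / 2) * (1 - S) * (1 + Real.sqrt (1 - 4 * S / (((I : ℝ) - 1) * (1 - S) ^ 2)))

/-- The derivative of `ψ` on `[0,1)`. -/
lemma deriv_psiFun_eq (m : ℕ) (S ρ : ℝ) (hρ0 : 0 ≤ ρ) (hρ1 : ρ < 1) :
    deriv (psiFun (m + 2) S) ρ =
      (((m:ℝ)+2) / (2*(1-ρ)^2*(1+((m:ℝ)+1)*ρ))) *
        (((m:ℝ)+1)*ρ*(1-ρ) - S*(1+((m:ℝ)+1)*ρ)) := by
  have h1ρ : (0:ℝ) < 1 - ρ := by linarith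
  have hA : (0:ℝ) < 1 + ((m:ℝ)+1)*ρ := by positivity
  have hB : (0:ℝ) < (1-ρ)^(m+1) := by positivity
  have h1 : HasDerivAt (fun x : ℝ => 1 + ((m:ℝ)+1)*x) ((m:ℝ)+1) ρ := by
    simpa using ((hasDerivAt_id ρ).const_mul ((m:ℝ)+1)).const_add 1
  have h2 : HasDerivAt (fun x : ℝ => (1-x)^(m+1)) (((m:ℝ)+1)*(1-ρ)^m * (-1)) ρ := by
    have := ((hasDerivAt_id ρ).const_sub 1).fun_pow (m+1)
    simpa using this
  have h12 := h1.mul h2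
  have hlog := h12.log (ne_of_gt (mul_pos hA hB))
  have h3 : HasDerivAt (fun x : ℝ => ((m:ℝ)+2)*S*x) (((m:ℝ)+2)*S) ρ := by
    simpa using (hasDerivAt_id ρ).const_mul (((m:ℝ)+2)*S)
  have h4 : HasDerivAt (fun x : ℝ => 2*(1-x)) (-2 : ℝ) ρ := by
    simpa using ((hasDerivAt_id ρ).const_sub 1).const_mul 2
  have hden : 2*(1-ρ) ≠ 0 := by positivity
  have hfrac := h3.div h4 hden
  have hψ := (hlog.const_mul (-(1/2) : ℝ)).sub hfrac
  have hfun : psiFun (m+2) S = fun x : ℝ =>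
      -(1/2) * Real.log ((1 + ((m:ℝ)+1)*x)*(1-x)^(m+1)) - ((m:ℝ)+2)*S*x/(2*(1-x)) := by
    funext x
    simp only [psiFun]
    norm_num
    ring_nf
  rw [hfun, (show HasDerivAt (fun x : ℝ =>
      -(1/2) * Real.log ((1 + ((m:ℝ)+1)*x)*(1-x)^(m+1)) - ((m:ℝ)+2)*S*x/(2*(1-x))) _ ρ from hψ).deriv]
  simp only [Pi.mul_apply]
  have hpow : (1-ρ)^(m+1) = (1-ρ)^m * (1-ρ) := pow_succ _ _
  field_simp
  ring

set_option maxHeartbeats 1000000 in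
lemma quad_nonneg_iff (m : ℕ) (S ρ : ℝ) (hS : 0 < S) (hρ0 : 0 ≤ ρ) (hρ1 : ρ < 1) :
    (0 ≤ ((m:ℝ)+1)*ρ*(1-ρ) - S*(1+((m:ℝ)+1)*ρ) ↔
      S ≤ (Real.sqrt ((m:ℝ)+2) - 1) / (Real.sqrt ((m:ℝ)+2) + 1) ∧
        rhoHatMinus (m+2) S ≤ ρ ∧ ρ ≤ rhoHatPlus (m+2) S) := by
  set c : ℝ := (m:ℝ)+1 with hc
  have hcpos : (0:ℝ) < c := by positivity
  set u : ℝ := Real.sqrt ((m:ℝ)+2) with hu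
  have hu2 : u^2 = (m:ℝ)+2 := Real.sq_sqrt (by positivity)
  have hu1 : 1 < u := by
    nlinarith [Real.sqrt_nonneg ((m:ℝ)+2)]
  set a : ℝ := S*(u+1) - (u-1) with ha
  have hid : c*(1-S)^2 - 4*S = a*(a - 2*(1+S)) := by
    have : c = u^2 - 1 := by rw [hu2]; ring
    rw [this, ha]; ring
  have hcoerce : ((m+2:ℕ):ℝ) = (m:ℝ)+2 := by push_cast; ring
  have hrm : rhoHatMinus (m+2) S
      = (1/2)*(1-S)*(1 - Real.sqrt (1 - 4*S/(c*(1-S)^2))) := by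
    simp only [rhoHatMinus, hcoerce, hc]; ring_nf
  have hrp : rhoHatPlus (m+2) S
      = (1/2)*(1-S)*(1 + Real.sqrt (1 - 4*S/(c*(1-S)^2))) := by
    simp only [rhoHatPlus, hcoerce, hc]; ring_nf
  clear_value u c a
  by_cases hSt : S ≤ (u-1)/(u+1)
  · -- case A
    have ht1 : (u-1)/(u+1) < 1 := by
      rw [div_lt_one (by linarith)]; linarith
    have hS1 : S < 1 := lt_of_le_of_lt hSt ht1
    have haneg : a ≤ 0 := by
      have := (le_div_iff₀ (by linarith : (0:ℝ) < u+1)).mp hSt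
      rw [ha]; linarith
    have hdisc : 4*S ≤ c*(1-S)^2 := by nlinarith
    have hpos2 : (0:ℝ) < c*(1-S)^2 :=
      mul_pos hcpos (pow_pos (by linarith) 2)
    have hDnn : 0 ≤ 1 - 4*S/(c*(1-S)^2) := by
      rw [sub_nonneg, div_le_one hpos2]; exact hdisc
    set s : ℝ := Real.sqrt (1 - 4*S/(c*(1-S)^2)) with hsdef
    have hs0 : 0 ≤ s := Real.sqrt_nonneg _
    have hs2 : s^2 = 1 - 4*S/(c*(1-S)^2) := Real.sq_sqrt hDnn
    have hs2' : c*(1-S)^2*s^2 = c*(1-S)^2 - 4*S := by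
      rw [hs2, mul_sub, mul_div_cancel₀ _ hpos2.ne']; ring
    clear_value s
    set ρm : ℝ := (1/2)*(1-S)*(1-s) with hρm
    set ρp : ℝ := (1/2)*(1-S)*(1+s) with hρp
    have hfac : c*ρ*(1-ρ) - S*(1+c*ρ) = -(c*(ρ-ρm)*(ρ-ρp)) := by
      rw [hρm, hρp]; linear_combination (-(1/4):ℝ) * hs2'
    have hle : ρm ≤ ρp := by rw [hρm, hρp]; nlinarith
    clear_value ρm ρp
    rw [hrm, hrp]
    constructor
    · intro h
      refine ⟨hSt, ?_, ?_⟩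
      · by_contra hcon
        push_neg at hcon
        nlinarith [hfac, mul_pos hcpos (mul_pos
          (by linarith : (0:ℝ) < ρm - ρ) (by linarith : (0:ℝ) < ρp - ρ))]
      · by_contra hcon
        push_neg at hcon
        nlinarith [hfac, mul_pos hcpos (mul_pos
          (by linarith : (0:ℝ) < ρ - ρm) (by linarith : (0:ℝ) < ρ - ρp))]
    · rintro ⟨-, h1, h2⟩
      rw [hfac]
      nlinarith [mul_nonneg hcpos.le (mul_nonneg (sub_nonneg.mpr h1) (sub_nonneg.mpr h2))]
  · -- case B
    push_neg at hSt
    have hneg : c*ρ*(1-ρ) - S*(1+c*ρ) < 0 := by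
      rcases le_or_gt 1 S with h1 | h1
      · nlinarith [mul_nonneg (mul_nonneg hcpos.le hρ0) hρ0,
          mul_le_mul_of_nonneg_right h1 (mul_nonneg hcpos.le hρ0)]
      · have hapos : 0 < a := by
          have := (div_lt_iff₀ (by linarith : (0:ℝ) < u+1)).mp hSt
          rw [ha]; linarith
        have ha2 : a < 2*(1+S) := by
          rw [ha]; nlinarith [mul_pos (by linarith : (0:ℝ) < u)
            (by linarith : (0:ℝ) < 1 - S)]
        have h4 : c*(1-S)^2 < 4*S := by
          have hh : a*(a - 2*(1+S)) < 0 :=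
            mul_neg_of_pos_of_neg hapos (by linarith)
          linarith [hid]
        nlinarith [mul_nonneg hcpos.le (sq_nonneg (2*ρ - (1-S))), h4]
    constructor
    · intro h; linarith
    · rintro ⟨h, -⟩; exact absurd h (not_le.mpr hSt)

theorem deriv_psi_nonneg_iff (I : ℕ) (hI : 2 ≤ I) (S : ℝ) (hS : 0 < S) :
    ∀ ρ ∈ Ico (0 : ℝ) 1,
      (0 ≤ deriv (psiFun I S) ρ ↔
        S ≤ (Real.sqrt I - 1) / (Real.sqrt I + 1) ∧
          rhoHatMinus I S ≤ ρ ∧ ρ ≤ rhoHatPlus I S) := by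
  obtain ⟨m, rfl⟩ : ∃ m, I = m + 2 := ⟨I - 2, by omega⟩
  rintro ρ ⟨hρ0, hρ1⟩
  have h1ρ : (0:ℝ) < 1 - ρ := by linarith
  have hA : (0:ℝ) < 1 + ((m:ℝ)+1)*ρ := by positivity
  have hK : (0:ℝ) < ((m:ℝ)+2) / (2*(1-ρ)^2*(1+((m:ℝ)+1)*ρ)) := by positivity
  rw [deriv_psiFun_eq m S ρ hρ0 hρ1, mul_nonneg_iff_of_pos_left hK,
    show ((m+2:ℕ):ℝ) = (m:ℝ)+2 by push_cast; ring]
  exact quad_nonneg_iff m S ρ hS hρ0 hρ1
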